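/- For every $T > 0$, every $c \in (0, 1/2)$ and every $K \ge 0$, there exists a positive integer $m$ such that, with $\gamma = m^2 + K$, $u_m(x,t) = m\sin(mx)\,e^{-\gamma t}\,\frac{e^{2\gamma t}-1}{2\gamma}$ and $F_m(x,t) = -\cos(mx)e^{\gamma t}$, one has $\int_{-\pi}^{\pi} u_m(x,T)^2\,dx \;\ge\; \left(\frac{1}{2} - c\right) \int_0^T \int_{-\pi}^{\pi} F_m(x,t)^2\,dx\,dt$. -/
import Mathlib

open Real intervalIntegral

lemma sin_sq_int (m : ℕ) (hm : 0 < m) :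
    ∫ x in (-Real.pi)..Real.pi, Real.sin ((m:ℝ)*x)^2 = Real.pi := by
  have hmne : (m:ℝ) ≠ 0 := Nat.cast_ne_zero.mpr hm.ne'
  rw [intervalIntegral.integral_comp_mul_left (fun y => Real.sin y ^ 2) hmne,
    integral_sin_sq]
  simp [mul_neg, Real.sin_nat_mul_pi, smul_eq_mul]
  field_simp

lemma cos_sq_int (m : ℕ) (hm : 0 < m) :
    ∫ x in (-Real.pi)..Real.pi, Real.cos ((m:ℝ)*x)^2 = Real.pi := by
  have hmne : (m:ℝ) ≠ 0 := Nat.cast_ne_zero.mpr hm.ne'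
  rw [intervalIntegral.integral_comp_mul_left (fun y => Real.cos y ^ 2) hmne,
    integral_cos_sq]
  simp [mul_neg, Real.sin_nat_mul_pi, smul_eq_mul]
  field_simp

lemma exp_int (γ T : ℝ) (hγ : γ ≠ 0) :
    ∫ t in (0:ℝ)..T, Real.exp (2*γ*t) = (Real.exp (2*γ*T) - 1) / (2*γ) := by
  have h2 : (2*γ) ≠ 0 := by simp [hγ]
  have := intervalIntegral.integral_comp_mul_left (a := (0:ℝ)) (b := T)
    (fun y => Real.exp y) h2
  simp only [mul_assoc] at this ⊢
  rw [this, integral_exp]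
  simp [smul_eq_mul, div_eq_inv_mul]

lemma final_ineq (γ c E p N : ℝ) (hγ : 0 < γ) (hE : 0 < E) (hE1 : 1 ≤ E)
    (hp : 0 ≤ p) (key : (1-2*c)*γ*E ≤ N^2*(E-1)) :
    (1/2 - c) * (p * ((E-1)/(2*γ))) ≤ N^2 * E⁻¹ * ((E-1)/(2*γ))^2 * p := by
  rw [← sub_nonneg]
  have hid : N^2 * E⁻¹ * ((E-1)/(2*γ))^2 * p - (1/2 - c) * (p * ((E - 1) / (2*γ)))
      = ((E-1) * p / (4*γ^2*E)) * (N^2*(E-1) - (1-2*c)*γ*E) := by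
    field_simp
    ring
  rw [hid]
  apply mul_nonneg
  · apply div_nonneg (mul_nonneg (by linarith) hp) (by positivity)
  · linarith

/-- for every `T > 0`, `c ∈ (0,1/2)` and `K ≥ 0` there is a positive integer `m`
such that, with `γ = m² + K`, the explicit solution `u_m` and potential `F_m` satisfy
`∫_{-π}^{π} u_m(x,T)² dx ≥ (1/2 - c) ∫_0^T ∫_{-π}^{π} F_m(x,t)² dx dt`. -/
theorem stmt_6 (T : ℝ) (hT : 0 < T) (c : ℝ) (hc : c ∈ Set.Ioo (0:ℝ) (1/2))
    (K : ℝ) (hK : 0 ≤ K) :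
    ∃ m : ℕ, 0 < m ∧
      ∀ (γ : ℝ), γ = (m : ℝ) ^ 2 + K →
      ∀ (u F : ℝ → ℝ → ℝ),
        (∀ x t, u x t = (m : ℝ) * Real.sin ((m : ℝ) * x) * Real.exp (-γ * t) *
            ((Real.exp (2 * γ * t) - 1) / (2 * γ))) →
        (∀ x t, F x t = -Real.cos ((m : ℝ) * x) * Real.exp (γ * t)) →
        (∫ x in (-Real.pi)..Real.pi, (u x T) ^ 2)
          ≥ (1 / 2 - c) * ∫ t in (0:ℝ)..T, ∫ x in (-Real.pi)..Real.pi, (F x t) ^ 2 := by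
  obtain ⟨hc0, hc2⟩ := hc
  obtain ⟨N, hN⟩ := exists_nat_gt (max (max ((1-c)*K/c) ((-Real.log c)/(2*T))) 0)
  have hN0 : 0 < N := by
    by_contra h
    push_neg at h
    interval_cases N
    exact absurd hN (by simp)
  refine ⟨N, hN0, ?_⟩
  intro γ hγ u F hu hF
  have hN1 : (1:ℝ) ≤ (N:ℝ) := Nat.one_le_cast.mpr hN0
  have hNsq : (N:ℝ) ≤ (N:ℝ)^2 := by nlinarith
  have hb1 : (1-c)*K/c < (N:ℝ)^2 :=
    lt_of_lt_of_le (lt_of_le_of_lt (le_trans (le_max_left _ _) (le_max_left _ _)) hN) hNsq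
  have hb2 : (-Real.log c)/(2*T) < (N:ℝ)^2 :=
    lt_of_lt_of_le (lt_of_le_of_lt (le_trans (le_max_right _ _) (le_max_left _ _)) hN) hNsq
  have hγpos : 0 < γ := by rw [hγ]; nlinarith
  have hγN : (N:ℝ)^2 ≤ γ := by rw [hγ]; linarith
  -- key scalar facts
  have hm2 : (1-c) * γ ≤ (N:ℝ)^2 := by
    rw [hγ]
    have : (1-c)*K < (N:ℝ)^2 * c := (div_lt_iff₀ hc0).mp hb1
    nlinarith
  have hE1 : 1 < Real.exp (2*γ*T) := by
    rw [show (1:ℝ) = Real.exp 0 by simp]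
    exact Real.exp_lt_exp.mpr (by positivity)
  have hE0 : (0:ℝ) < Real.exp (2*γ*T) := Real.exp_pos _
  have hcE : 1 ≤ c * Real.exp (2*γ*T) := by
    have h1 : -Real.log c < 2*T*γ := by
      have := (div_lt_iff₀ (by positivity : (0:ℝ) < 2*T)).mp hb2
      nlinarith
    have h2 : Real.exp (-(2*γ*T)) < Real.exp (Real.log c) := by
      apply Real.exp_lt_exp.mpr; nlinarith
    rw [Real.exp_log hc0] at h2
    have := Real.exp_neg (2*γ*T)
    rw [this] at h2
    rw [inv_lt_iff_one_lt_mul₀ hE0] at h2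
    nlinarith
  have key : (1 - 2*c) * γ * Real.exp (2*γ*T) ≤ (N:ℝ)^2 * (Real.exp (2*γ*T) - 1) := by
    have h1 : (0:ℝ) ≤ (N:ℝ)^2 - (1-c)*γ := by linarith
    have h2 : (0:ℝ) ≤ (Real.exp (2*γ*T) - 1) - (1-c)*Real.exp (2*γ*T) := by nlinarith
    nlinarith [mul_nonneg h1 h2, mul_pos hγpos hE0, mul_nonneg (mul_nonneg (sq_nonneg c) hγpos.le) hE0.le]
  -- compute the integrals
  have hLHS : (∫ x in (-Real.pi)..Real.pi, (u x T) ^ 2)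
      = ((N:ℝ) * Real.exp (-γ*T) * ((Real.exp (2*γ*T)-1)/(2*γ)))^2 * Real.pi := by
    have h : ∀ x, (u x T)^2
        = ((N:ℝ) * Real.exp (-γ*T) * ((Real.exp (2*γ*T)-1)/(2*γ)))^2 * Real.sin ((N:ℝ)*x)^2 := by
      intro x; rw [hu]; ring
    simp_rw [h]
    rw [intervalIntegral.integral_const_mul, sin_sq_int N hN0]
  have hinner : ∀ t, (∫ x in (-Real.pi)..Real.pi, (F x t)^2)
      = Real.pi * Real.exp (2*γ*t) := by
    intro t
    have h : ∀ x, (F x t)^2 = Real.exp (γ*t)^2 * Real.cos ((N:ℝ)*x)^2 := by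
      intro x; rw [hF]; ring
    simp_rw [h]
    rw [intervalIntegral.integral_const_mul, cos_sq_int N hN0]
    rw [pow_two, ← Real.exp_add]
    ring_nf
  have hRHS : (∫ t in (0:ℝ)..T, ∫ x in (-Real.pi)..Real.pi, (F x t) ^ 2)
      = Real.pi * ((Real.exp (2*γ*T) - 1) / (2*γ)) := by
    simp_rw [hinner]
    rw [intervalIntegral.integral_const_mul, exp_int γ T hγpos.ne']
  rw [hLHS, hRHS]
  -- final scalar inequality
  have hexp : Real.exp (-γ*T)^2 = (Real.exp (2*γ*T))⁻¹ := by
    rw [← Real.exp_neg, pow_two, ← Real.exp_add]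
    congr 1; ring
  rw [ge_iff_le, mul_pow, mul_pow, hexp]
  exact final_ineq γ c (Real.exp (2*γ*T)) Real.pi (N:ℝ) hγpos hE0 hE1.le
    Real.pi_pos.le key
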